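/- Let η be a finite-dimensional abelian Lie algebra with basis h₁,…,h_k, and let H = D ⊗ U_ℏ𝔤 be the Hopf algebroid over R = M(η*)[[ℏ]], where D is the algebra of meromorphic differential operators on η*. Set θ = Σᵢ (∂/∂λᵢ ⊗ hᵢ) ∈ H⊗H and Θ = exp(ℏθ). Then Θ satisfies the twistor cocycle identity ((Δ ⊗_R id)Θ)Θ¹² = ((id ⊗_R Δ)Θ)Θ²³ and the counit identities (ε ⊗_R id)Θ = (id ⊗_R ε)Θ = 1. -/

import Mathlib

open TensorProduct

noncomputable section

variable (k : Type) {H R : Type} [CommRing k] [Ring H] [Algebra k H] [Ring R] [Algebra k R]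

/-- The relation submodule defining the `(R,R)`-bimodule tensor product `H ⊗_R H`,
where the right `R`-action on `H` is `h · a = bf a * h` and the left action is
`a · h = af a * h`.  Generators: `(bf a * x) ⊗ y - x ⊗ (af a * y)`. -/
def relQ (af bf : R → H) : Submodule k (H ⊗[k] H) :=
  Submodule.span k {z | ∃ (a : R) (x y : H), z = (bf a * x) ⊗ₜ[k] y - x ⊗ₜ[k] (af a * y)}

/-- `H ⊗_R H` as a quotient of `H ⊗[k] H`. -/
abbrev HtQ (af bf : R → H) : Type _ := (H ⊗[k] H) ⧸ relQ k af bf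

/-- The canonical projection `H ⊗[k] H → H ⊗_R H`. -/
def prQ (af bf : R → H) : H ⊗[k] H →ₗ[k] HtQ k af bf := (relQ k af bf).mkQ

lemma relQ_mul_right (af bf : R → H) {w : H ⊗[k] H} (hw : w ∈ relQ k af bf)
    (u : H ⊗[k] H) : w * u ∈ relQ k af bf := by
  induction hw using Submodule.span_induction with
  | mem z hz =>
      obtain ⟨a, x, y, rfl⟩ := hz
      induction u using TensorProduct.induction_on with
      | zero => simpa using (relQ k af bf).zero_mem
      | tmul p q =>
          rw [sub_mul, Algebra.TensorProduct.tmul_mul_tmul,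
            Algebra.TensorProduct.tmul_mul_tmul]
          exact Submodule.subset_span ⟨a, x * p, y * q, by rw [mul_assoc, mul_assoc]⟩
      | add u v hu hv => rw [mul_add]; exact add_mem hu hv
  | zero => simpa using (relQ k af bf).zero_mem
  | add u v _ _ hu hv => rw [add_mul]; exact add_mem hu hv
  | smul c u _ hu => rw [smul_mul_assoc]; exact Submodule.smul_mem _ c hu

/-- Right multiplication by `u ∈ H ⊗ H` descends to `H ⊗_R H`. -/
def mulRightQ (af bf : R → H) (u : H ⊗[k] H) : HtQ k af bf →ₗ[k] HtQ k af bf :=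
  Submodule.mapQ _ _ (LinearMap.mulRight k u)
    (fun w hw => by simpa using relQ_mul_right k af bf hw u)

lemma mulRightQ_mk (af bf : R → H) (u w : H ⊗[k] H) :
    mulRightQ k af bf u (prQ k af bf w) = prQ k af bf (w * u) := by
  simp [mulRightQ, prQ, Submodule.mapQ_apply]

/-- `u ↦ (right multiplication by `u` on `H ⊗_R H`)`, as a linear map. -/
def mulRightQL (af bf : R → H) :
    (H ⊗[k] H) →ₗ[k] (HtQ k af bf →ₗ[k] HtQ k af bf) where
  toFun := mulRightQ k af bf
  map_add' u v := by
    apply LinearMap.ext; intro x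
    obtain ⟨w, rfl⟩ := (relQ k af bf).mkQ_surjective x
    show mulRightQ k af bf (u + v) (prQ k af bf w)
        = mulRightQ k af bf u (prQ k af bf w) + mulRightQ k af bf v (prQ k af bf w)
    rw [mulRightQ_mk, mulRightQ_mk, mulRightQ_mk, mul_add, map_add]
  map_smul' c u := by
    apply LinearMap.ext; intro x
    obtain ⟨w, rfl⟩ := (relQ k af bf).mkQ_surjective x
    show mulRightQ k af bf (c • u) (prQ k af bf w) = c • mulRightQ k af bf u (prQ k af bf w)
    rw [mulRightQ_mk, mulRightQ_mk, mul_smul_comm, map_smul]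

/-- The map `Ψ : H ⊗ (H ⊗ H) → H ⊗_R H`, `h₁ ⊗ h₂ ⊗ h₃ ↦ Δ(h₁)(h₂ ⊗ h₃)`,
associated to a "coproduct" `D : H → H ⊗_R H`. -/
def PsiQ (af bf : R → H) (D : H →ₗ[k] HtQ k af bf) :
    H ⊗[k] (H ⊗[k] H) →ₗ[k] HtQ k af bf :=
  TensorProduct.lift ((mulRightQL k af bf).flip ∘ₗ D)

/-- The action of `x ⊗ y ⊗ w ∈ H ⊗ H^op ⊗ H^op` on `H ⊗ H ⊗ H`. -/
def Lact (x y w : H) : H ⊗[k] (H ⊗[k] H) →ₗ[k] H ⊗[k] (H ⊗[k] H) :=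
  TensorProduct.map (LinearMap.mulLeft k x)
    (TensorProduct.map (LinearMap.mulRight k y) (LinearMap.mulRight k w))

/-- The target map `β`, as a `k`-linear map `R →ₗ H`. -/
def unopL (β : R →ₐ[k] Hᵐᵒᵖ) : R →ₗ[k] H :=
  (MulOpposite.opLinearEquiv k).symm.toLinearMap ∘ₗ β.toLinearMap

/-- `φ_α`-type map: `φ (x ⊗ y) a = s (μ(x) a) * y`. -/
def phiAL (μ : H →ₐ[k] Module.End k R) (s : R →ₗ[k] H) :
    (H ⊗[k] H) →ₗ[k] R →ₗ[k] H :=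
  TensorProduct.lift (LinearMap.mk₂ k
    (fun x y => LinearMap.mulRight k y ∘ₗ s ∘ₗ (μ x : R →ₗ[k] R))
    (by intro x₁ x₂ y; apply LinearMap.ext; intro a
        simp [map_add, add_mul])
    (by intro c x y; apply LinearMap.ext; intro a
        simp [map_smul, smul_mul_assoc])
    (by intro x y₁ y₂; apply LinearMap.ext; intro a
        simp [mul_add])
    (by intro c x y; apply LinearMap.ext; intro a
        simp [mul_smul_comm]))

/-- `φ_β`-type map: `φ (x ⊗ y) a = s (μ(y) a) * x`. -/
def phiBL (μ : H →ₐ[k] Module.End k R) (s : R →ₗ[k] H) :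
    (H ⊗[k] H) →ₗ[k] R →ₗ[k] H :=
  TensorProduct.lift (LinearMap.mk₂ k
    (fun x y => LinearMap.mulRight k x ∘ₗ s ∘ₗ (μ y : R →ₗ[k] R))
    (by intro x₁ x₂ y; apply LinearMap.ext; intro a
        simp [mul_add])
    (by intro c x y; apply LinearMap.ext; intro a
        simp [mul_smul_comm])
    (by intro x y₁ y₂; apply LinearMap.ext; intro a
        simp [map_add, add_mul])
    (by intro c x y; apply LinearMap.ext; intro a
        simp [map_smul, smul_mul_assoc]))

/-- Evaluation of an element of `H ⊗ H` on a pair of elements of `R` through the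
anchor: `(x ⊗ y)(a, b) = μ(x)(a) * μ(y)(b)`. -/
def ev2 (μ : H →ₐ[k] Module.End k R) :
    (H ⊗[k] H) →ₗ[k] R →ₗ[k] R →ₗ[k] R :=
  TensorProduct.lift (LinearMap.mk₂ k
    (fun x y => (LinearMap.mul k R).compl₁₂ (μ x : R →ₗ[k] R) (μ y : R →ₗ[k] R))
    (by intro x₁ x₂ y; apply LinearMap.ext; intro a; apply LinearMap.ext; intro b
        simp [map_add, add_mul])
    (by intro c x y; apply LinearMap.ext; intro a; apply LinearMap.ext; intro b
        simp [map_smul, smul_mul_assoc])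
    (by intro x y₁ y₂; apply LinearMap.ext; intro a; apply LinearMap.ext; intro b
        simp [map_add, mul_add])
    (by intro c x y; apply LinearMap.ext; intro a; apply LinearMap.ext; intro b
        simp [map_smul, mul_smul_comm]))

/-- `(ε ⊗_R id)`-type counit evaluation: `x ⊗ y ↦ s(ε x) * y`. -/
def e1 (s : R →ₗ[k] H) (ε : H →ₗ[k] R) : (H ⊗[k] H) →ₗ[k] H :=
  TensorProduct.lift (LinearMap.mk₂ k
    (fun x y => s (ε x) * y)
    (by intro x₁ x₂ y; simp [map_add, add_mul])
    (by intro c x y; simp [map_smul, smul_mul_assoc])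
    (by intro x y₁ y₂; simp [mul_add])
    (by intro c x y; simp [mul_smul_comm]))

/-- `(id ⊗_R ε)`-type counit evaluation: `x ⊗ y ↦ s(ε y) * x`. -/
def e2 (s : R →ₗ[k] H) (ε : H →ₗ[k] R) : (H ⊗[k] H) →ₗ[k] H :=
  TensorProduct.lift (LinearMap.mk₂ k
    (fun x y => s (ε y) * x)
    (by intro x₁ x₂ y; simp [mul_add])
    (by intro c x y; simp [mul_smul_comm])
    (by intro x y₁ y₂; simp [map_add, add_mul])
    (by intro c x y; simp [map_smul, smul_mul_assoc]))

/-- The relation submodule for the triple tensor product `H ⊗_R H ⊗_R H`. -/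
def relQ3 (af bf : R → H) : Submodule k ((H ⊗[k] H) ⊗[k] H) :=
  Submodule.span k
    ({w | ∃ (a : R) (x y z : H),
        w = ((bf a * x) ⊗ₜ[k] y) ⊗ₜ[k] z - (x ⊗ₜ[k] (af a * y)) ⊗ₜ[k] z} ∪
     {w | ∃ (a : R) (x y z : H),
        w = (x ⊗ₜ[k] (bf a * y)) ⊗ₜ[k] z - (x ⊗ₜ[k] y) ⊗ₜ[k] (af a * z)})

/-- `H ⊗_R H ⊗_R H`. -/
abbrev HtQ3 (af bf : R → H) : Type _ := ((H ⊗[k] H) ⊗[k] H) ⧸ relQ3 k af bf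

/-- Projection onto `H ⊗_R H ⊗_R H`. -/
def prQ3 (af bf : R → H) : (H ⊗[k] H) ⊗[k] H →ₗ[k] HtQ3 k af bf := (relQ3 k af bf).mkQ

variable {A : Type} [Ring A] [Algebra k A]

/-- Representative-level `(Δ ⊗ id)` map. -/
def DL (Δ' : H →ₗ[k] H ⊗[k] H) : H ⊗[k] H →ₗ[k] (H ⊗[k] H) ⊗[k] H :=
  TensorProduct.map Δ' LinearMap.id

/-- Representative-level `(id ⊗ Δ)` map (landing in the left-associated triple product). -/
def DR (Δ' : H →ₗ[k] H ⊗[k] H) : H ⊗[k] H →ₗ[k] (H ⊗[k] H) ⊗[k] H :=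
  (TensorProduct.assoc k H H H).symm.toLinearMap ∘ₗ TensorProduct.map LinearMap.id Δ'

/-- Reassociation `H ⊗ (H ⊗ H) → (H ⊗ H) ⊗ H`. -/
def aInv : H ⊗[k] (H ⊗[k] H) →ₗ[k] (H ⊗[k] H) ⊗[k] H :=
  (TensorProduct.assoc k H H H).symm.toLinearMap

/-- The cocycle identity `((Δ ⊗_R id)F)·F¹² = ((id ⊗_R Δ)F)·F²³` in `H ⊗_R H ⊗_R H`,
stated at the level of a representative `F'` and a representative lift `Δ'` of the
coproduct. -/
def IsCocycle (af bf : R → H) (Δ' : H →ₗ[k] H ⊗[k] H) (F' : H ⊗[k] H) : Prop :=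
  prQ3 k af bf (DL k Δ' F' * (F' ⊗ₜ[k] (1 : H)))
    = prQ3 k af bf (DR k Δ' F' * aInv k ((1 : H) ⊗ₜ[k] F'))

/-- The counit identities `(ε ⊗_R id)F = 1 = (id ⊗_R ε)F`. -/
def IsCounital (s t : R →ₗ[k] H) (ε : H →ₗ[k] R) (F' : H ⊗[k] H) : Prop :=
  e1 k s ε F' = 1 ∧ e2 k t ε F' = 1

end

noncomputable section

open TensorProduct

variable (k : Type) {R D G : Type} [Field k] [CharZero k]
  [CommRing R] [Algebra k R] [Ring D] [Algebra k D]
  [Ring G] [Bialgebra k G]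

/-- The source map of the Hopf algebroid `H = D ⊗ U_ℏ𝔤` over `R = M(η*)[[ℏ]]`. -/
def srcH (G : Type) [Ring G] [Bialgebra k G] (αD : R →ₐ[k] D) : R →ₐ[k] D ⊗[k] G :=
  (Algebra.TensorProduct.includeLeft : D →ₐ[k] D ⊗[k] G).comp αD

/-- The target map of `H = D ⊗ U_ℏ𝔤` (equal to the source map; it is an
anti-homomorphism since the image of `αD` is commutative). -/
def tgtH (αD : R →ₐ[k] D) (hα : ∀ a b : R, αD a * αD b = αD b * αD a) :
    R →ₐ[k] (D ⊗[k] G)ᵐᵒᵖ where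
  toFun a := MulOpposite.op (srcH k G αD a)
  map_one' := by simp
  map_mul' a b := by
    have hc : srcH k G αD a * srcH k G αD b = srcH k G αD b * srcH k G αD a := by
      rw [← map_mul, ← map_mul, mul_comm]
    show MulOpposite.op (srcH k G αD (a * b))
        = MulOpposite.op (srcH k G αD a) * MulOpposite.op (srcH k G αD b)
    rw [← MulOpposite.op_mul, map_mul, hc]
  map_zero' := by simp
  map_add' a b := by simp
  commutes' c := by
    show MulOpposite.op (srcH k G αD (algebraMap k R c)) = algebraMap k (D ⊗[k] G)ᵐᵒᵖ c
    rw [MulOpposite.algebraMap_apply]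
    exact congrArg MulOpposite.op ((srcH k G αD).commutes c)

/-- The coproduct of `H = D ⊗ U_ℏ𝔤`, built from a lift `Δ'D` of the coproduct of
`D` and the comultiplication of `G`. -/
def copH (Δ'D : D →ₗ[k] D ⊗[k] D) :
    D ⊗[k] G →ₗ[k] (D ⊗[k] G) ⊗[k] (D ⊗[k] G) :=
  (TensorProduct.tensorTensorTensorComm k D D G G).toLinearMap ∘ₗ
    TensorProduct.map Δ'D (Coalgebra.comul (R := k) (A := G))

/-- The counit of `H = D ⊗ U_ℏ𝔤`: `ε(x ⊗ u) = ε₀(u) • x(1)`. -/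
def couH (μD : D →ₐ[k] Module.End k R) : D ⊗[k] G →ₗ[k] R :=
  TensorProduct.lift (LinearMap.mk₂ k
    (fun x u => Coalgebra.counit (R := k) u • μD x 1)
    (by intro x₁ x₂ u; simp only [map_add, LinearMap.add_apply, smul_add])
    (by intro c x u; simp only [map_smul, LinearMap.smul_apply]; rw [smul_comm])
    (by intro x u₁ u₂; simp only [map_add, add_smul])
    (by intro c x u; simp only [map_smul]; rw [smul_assoc]))

/-- The anchor of `H = D ⊗ U_ℏ𝔤`: `μ(x ⊗ u)(f) = ε₀(u) x(f)`. -/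
def ancH (μD : D →ₐ[k] Module.End k R) : D ⊗[k] G →ₐ[k] Module.End k R :=
  Algebra.TensorProduct.lift μD
    ((Algebra.ofId k (Module.End k R)).comp (Bialgebra.counitAlgHom k G))
    (fun x u => by
      show μD x * algebraMap k (Module.End k R) ((Bialgebra.counitAlgHom k G) u)
          = algebraMap k (Module.End k R) ((Bialgebra.counitAlgHom k G) u) * μD x
      exact (Algebra.commutes _ _).symm)

/-- `θ = Σᵢ ∂/∂λᵢ ⊗ hᵢ` as an element of `H ⊗ H`. -/
def thetaH {N : ℕ} (d : Fin N → D) (h : Fin N → G) :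
    (D ⊗[k] G) ⊗[k] (D ⊗[k] G) :=
  ∑ i, (d i ⊗ₜ[k] (1 : G)) ⊗ₜ[k] ((1 : D) ⊗ₜ[k] h i)

/-- `Θ = exp(ℏθ)` as a formal series: `Θₙ = θⁿ/n!`. -/
def ThetaH {N : ℕ} (d : Fin N → D) (h : Fin N → G) (n : ℕ) :
    (D ⊗[k] G) ⊗[k] (D ⊗[k] G) :=
  ((n.factorial : k)⁻¹) • (thetaH k d h) ^ n

end

noncomputable section AuxLemmas

open TensorProduct Finset

variable (k : Type) {H R : Type} [CommRing k] [Ring H] [Algebra k H] [Ring R] [Algebra k R]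

lemma relQ_tmul_mem (af bf : R → H) {w : H ⊗[k] H} (hw : w ∈ relQ k af bf) (z : H) :
    w ⊗ₜ[k] z ∈ relQ3 k af bf := by
  induction hw using Submodule.span_induction with
  | mem g hg =>
      obtain ⟨a, x, y, rfl⟩ := hg
      rw [sub_tmul]
      exact Submodule.subset_span (Or.inl ⟨a, x, y, z, rfl⟩)
  | zero => simpa using (relQ3 k af bf).zero_mem
  | add u v _ _ hu hv => rw [add_tmul]; exact add_mem hu hv
  | smul c u _ hu => rw [← smul_tmul']; exact Submodule.smul_mem _ c hu

lemma aInv_tmul_relQ_mem (af bf : R → H) (x : H) {w : H ⊗[k] H} (hw : w ∈ relQ k af bf) :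
    aInv k (x ⊗ₜ[k] w) ∈ relQ3 k af bf := by
  induction hw using Submodule.span_induction with
  | mem g hg =>
      obtain ⟨a, p, q, rfl⟩ := hg
      rw [tmul_sub, map_sub]
      have h1 : aInv (H := H) k (x ⊗ₜ[k] ((bf a * p) ⊗ₜ[k] q)) = (x ⊗ₜ[k] (bf a * p)) ⊗ₜ[k] q :=
        TensorProduct.assoc_symm_tmul x (bf a * p) q
      have h2 : aInv (H := H) k (x ⊗ₜ[k] (p ⊗ₜ[k] (af a * q))) = (x ⊗ₜ[k] p) ⊗ₜ[k] (af a * q) :=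
        TensorProduct.assoc_symm_tmul x p (af a * q)
      rw [h1, h2]
      exact Submodule.subset_span (Or.inr ⟨a, x, p, q, rfl⟩)
  | zero => simpa using (relQ3 k af bf).zero_mem
  | add u v _ _ hu hv => rw [tmul_add, map_add]; exact add_mem hu hv
  | smul c u _ hu => rw [tmul_smul, map_smul]; exact Submodule.smul_mem _ c hu

lemma aInv_apply_eq (u : H ⊗[k] (H ⊗[k] H)) :
    aInv k u = (Algebra.TensorProduct.assoc k k k H H H).symm u := by
  induction u using TensorProduct.induction_on with
  | zero => simp
  | tmul x w =>
      induction w using TensorProduct.induction_on with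
      | zero => simp [tmul_zero]
      | tmul y z =>
          rw [Algebra.TensorProduct.assoc_symm_tmul]
          exact TensorProduct.assoc_symm_tmul x y z
      | add a b ha hb => rw [tmul_add, map_add, map_add, ha, hb]
  | add a b ha hb => rw [map_add, map_add, ha, hb]

lemma aInv_mul (u v : H ⊗[k] (H ⊗[k] H)) :
    aInv k (u * v) = aInv k u * aInv k v := by
  simp only [aInv_apply_eq, map_mul]

lemma aInv_one : aInv (H := H) k 1 = 1 := by
  rw [aInv_apply_eq, map_one]

lemma relQ3_mul_right (af bf : R → H) {w : (H ⊗[k] H) ⊗[k] H} (hw : w ∈ relQ3 k af bf)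
    (u : (H ⊗[k] H) ⊗[k] H) : w * u ∈ relQ3 k af bf := by
  induction hw using Submodule.span_induction generalizing u with
  | mem g hg =>
      rcases hg with hg | hg
      · obtain ⟨a, x, y, z, rfl⟩ := hg
        induction u using TensorProduct.induction_on with
        | zero => simpa using (relQ3 k af bf).zero_mem
        | tmul p r =>
            have key : (((bf a * x) ⊗ₜ[k] y) ⊗ₜ[k] z - (x ⊗ₜ[k] (af a * y)) ⊗ₜ[k] z)
                  * (p ⊗ₜ[k] r)
                = (((bf a * x) ⊗ₜ[k] y - x ⊗ₜ[k] (af a * y)) * p) ⊗ₜ[k] (z * r) := by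
              rw [sub_mul, sub_mul, sub_tmul, Algebra.TensorProduct.tmul_mul_tmul,
                Algebra.TensorProduct.tmul_mul_tmul]
            rw [key]
            exact relQ_tmul_mem k af bf
              (relQ_mul_right k af bf (Submodule.subset_span ⟨a, x, y, rfl⟩) p) _
        | add p q hp hq => rw [mul_add]; exact add_mem hp hq
      · obtain ⟨a, x, y, z, rfl⟩ := hg
        have hg2 : ((bf a * y) ⊗ₜ[k] z - y ⊗ₜ[k] (af a * z)) ∈ relQ k af bf :=
          Submodule.subset_span ⟨a, y, z, rfl⟩
        have hrepr : (x ⊗ₜ[k] (bf a * y)) ⊗ₜ[k] z - (x ⊗ₜ[k] y) ⊗ₜ[k] (af a * z)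
            = aInv k (x ⊗ₜ[k] ((bf a * y) ⊗ₜ[k] z - y ⊗ₜ[k] (af a * z))) := by
          rw [tmul_sub, map_sub]
          rw [show aInv (H := H) k (x ⊗ₜ[k] ((bf a * y) ⊗ₜ[k] z))
              = (x ⊗ₜ[k] (bf a * y)) ⊗ₜ[k] z from TensorProduct.assoc_symm_tmul _ _ _]
          rw [show aInv (H := H) k (x ⊗ₜ[k] (y ⊗ₜ[k] (af a * z)))
              = (x ⊗ₜ[k] y) ⊗ₜ[k] (af a * z) from TensorProduct.assoc_symm_tmul _ _ _]
        obtain ⟨C, rfl⟩ : ∃ C, u = aInv k C :=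
          ⟨(TensorProduct.assoc k H H H) u, by
            simp [aInv, LinearEquiv.symm_apply_apply]⟩
        rw [hrepr, ← aInv_mul]
        induction C using TensorProduct.induction_on with
        | zero => simpa using (relQ3 k af bf).zero_mem
        | tmul p v =>
            rw [Algebra.TensorProduct.tmul_mul_tmul]
            exact aInv_tmul_relQ_mem k af bf _ (relQ_mul_right k af bf hg2 v)
        | add p q hp hq => rw [mul_add, map_add]; exact add_mem hp hq
  | zero => simpa using (relQ3 k af bf).zero_mem
  | add w₁ w₂ _ _ h₁ h₂ => rw [add_mul]; exact add_mem (h₁ u) (h₂ u)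
  | smul c w _ hw => rw [smul_mul_assoc]; exact Submodule.smul_mem _ c (hw u)

lemma pow_descend (af bf : R → H) (F : H ⊗[k] H →ₗ[k] (H ⊗[k] H) ⊗[k] H)
    (θ : H ⊗[k] H) (T : (H ⊗[k] H) ⊗[k] H)
    (hF1 : F 1 = 1)
    (hstep : ∀ u : H ⊗[k] H, F (u * θ) - F u * T ∈ relQ3 k af bf) :
    ∀ (p : ℕ) (w : (H ⊗[k] H) ⊗[k] H),
      prQ3 k af bf (F (θ ^ p) * w) = prQ3 k af bf (T ^ p * w) := by
  intro p
  induction p with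
  | zero => intro w; rw [pow_zero, pow_zero, hF1]
  | succ p ih =>
      intro w
      have h1 : prQ3 k af bf (F (θ ^ (p + 1)) * w) = prQ3 k af bf (F (θ ^ p) * (T * w)) := by
        show Submodule.Quotient.mk _ = Submodule.Quotient.mk _
        rw [Submodule.Quotient.eq]
        have hd : F (θ ^ (p + 1)) * w - F (θ ^ p) * (T * w)
            = (F (θ ^ p * θ) - F (θ ^ p) * T) * w := by
          rw [sub_mul, ← pow_succ, mul_assoc]
        rw [hd]
        exact relQ3_mul_right k af bf (hstep _) w
      rw [h1, ih (T * w), ← mul_assoc, ← pow_succ]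

lemma DL_step (af bf : R → H) (c : H →ₗ[k] H ⊗[k] H)
    (hcm : ∀ x y : H, c (x * y) - c x * c y ∈ relQ k af bf)
    (a b : H) (u : H ⊗[k] H) :
    DL k c (u * (a ⊗ₜ[k] b)) - DL k c u * (c a ⊗ₜ[k] b) ∈ relQ3 k af bf := by
  induction u using TensorProduct.induction_on with
  | zero => simpa using (relQ3 k af bf).zero_mem
  | tmul x y =>
      rw [Algebra.TensorProduct.tmul_mul_tmul]
      have h1 : DL k c ((x * a) ⊗ₜ[k] (y * b)) = c (x * a) ⊗ₜ[k] (y * b) := by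
        simp [DL]
      have h2 : DL k c (x ⊗ₜ[k] y) = c x ⊗ₜ[k] y := by simp [DL]
      rw [h1, h2, Algebra.TensorProduct.tmul_mul_tmul, ← sub_tmul]
      exact relQ_tmul_mem k af bf (hcm x a) _
  | add p q hp hq =>
      have hdist : (p + q) * (a ⊗ₜ[k] b) = p * (a ⊗ₜ[k] b) + q * (a ⊗ₜ[k] b) :=
        add_mul _ _ _
      rw [hdist, map_add, map_add, add_mul]
      have hm := add_mem hp hq
      rw [sub_add_sub_comm] at hm
      exact hm

lemma DR_step (af bf : R → H) (c : H →ₗ[k] H ⊗[k] H)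
    (hcm : ∀ x y : H, c (x * y) - c x * c y ∈ relQ k af bf)
    (a b : H) (u : H ⊗[k] H) :
    DR k c (u * (a ⊗ₜ[k] b)) - DR k c u * aInv k (a ⊗ₜ[k] c b) ∈ relQ3 k af bf := by
  induction u using TensorProduct.induction_on with
  | zero => simpa using (relQ3 k af bf).zero_mem
  | tmul x y =>
      rw [Algebra.TensorProduct.tmul_mul_tmul]
      have h1 : DR k c ((x * a) ⊗ₜ[k] (y * b)) = aInv k ((x * a) ⊗ₜ[k] c (y * b)) := by
        simp [DR, aInv]
      have h2 : DR k c (x ⊗ₜ[k] y) = aInv k (x ⊗ₜ[k] c y) := by simp [DR, aInv]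
      rw [h1, h2, ← aInv_mul, Algebra.TensorProduct.tmul_mul_tmul, ← map_sub, ← tmul_sub]
      exact aInv_tmul_relQ_mem k af bf _ (hcm y b)
  | add p q hp hq =>
      have hdist : (p + q) * (a ⊗ₜ[k] b) = p * (a ⊗ₜ[k] b) + q * (a ⊗ₜ[k] b) :=
        add_mul _ _ _
      rw [hdist, map_add, map_add, add_mul]
      have hm := add_mem hp hq
      rw [sub_add_sub_comm] at hm
      exact hm

end AuxLemmas

noncomputable section CocycleMain

open TensorProduct Finset

lemma comb_aux {k A : Type} [Field k] [CharZero k] [Ring A] [Algebra k A]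
    (s x : A) (hsx : s * x = x * s) (n : ℕ) :
    ∑ p ∈ antidiagonal n,
      ((p.1.factorial : k)⁻¹ * (p.2.factorial : k)⁻¹) • (s ^ p.1 * x ^ p.2)
      = ((n.factorial : k))⁻¹ • (s + x) ^ n := by
  rw [Finset.Nat.sum_antidiagonal_eq_sum_range_succ_mk,
    (show Commute s x from hsx).add_pow, Finset.smul_sum]
  apply Finset.sum_congr rfl
  intro m hm
  have hmn : m ≤ n := Nat.lt_succ_iff.mp (Finset.mem_range.mp hm)
  have hnat : ((n.choose m : k)) * (m.factorial : k) * ((n - m).factorial : k)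
      = (n.factorial : k) := by
    exact_mod_cast congrArg (Nat.cast : ℕ → k) (Nat.choose_mul_factorial_mul_factorial hmn)
  have hsc : (m.factorial : k)⁻¹ * ((n - m).factorial : k)⁻¹
      = (n.factorial : k)⁻¹ * (n.choose m : k) := by
    have h1 : (m.factorial : k) ≠ 0 := Nat.cast_ne_zero.mpr m.factorial_ne_zero
    have h2 : ((n - m).factorial : k) ≠ 0 := Nat.cast_ne_zero.mpr (n - m).factorial_ne_zero
    have h3 : (n.factorial : k) ≠ 0 := Nat.cast_ne_zero.mpr n.factorial_ne_zero
    field_simp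
    rw [← hnat]; ring
  rw [hsc, mul_smul, Nat.cast_smul_eq_nsmul, nsmul_eq_mul']

variable (k : Type) {H R : Type} [Field k] [CharZero k] [Ring H] [Algebra k H]
  [Ring R] [Algebra k R]

lemma cocycle_main (af bf : R → H) (c : H →ₗ[k] H ⊗[k] H)
    (hc1 : c 1 = 1)
    (hcm : ∀ x y : H, c (x * y) - c x * c y ∈ relQ k af bf)
    {N : ℕ} (A B : Fin N → H)
    (hcA : ∀ i, c (A i) = A i ⊗ₜ[k] (1 : H) + (1 : H) ⊗ₜ[k] A i)
    (hcB : ∀ i, c (B i) = B i ⊗ₜ[k] (1 : H) + (1 : H) ⊗ₜ[k] B i)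
    (hAA : ∀ i j, A i * A j = A j * A i)
    (hBB : ∀ i j, B i * B j = B j * B i)
    (hAB : ∀ i j, A i * B j = B j * A i)
    (n : ℕ) :
    prQ3 k af bf (∑ p ∈ antidiagonal n,
        DL k c ((p.1.factorial : k)⁻¹ • (∑ i, A i ⊗ₜ[k] B i) ^ p.1)
          * (((p.2.factorial : k)⁻¹ • (∑ i, A i ⊗ₜ[k] B i) ^ p.2) ⊗ₜ[k] (1 : H)))
      = prQ3 k af bf (∑ p ∈ antidiagonal n,
        DR k c ((p.1.factorial : k)⁻¹ • (∑ i, A i ⊗ₜ[k] B i) ^ p.1)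
          * aInv k ((1 : H) ⊗ₜ[k] ((p.2.factorial : k)⁻¹ • (∑ i, A i ⊗ₜ[k] B i) ^ p.2))) := by
  set θ : H ⊗[k] H := ∑ i, A i ⊗ₜ[k] B i with hθ
  set U : (H ⊗[k] H) ⊗[k] H := θ ⊗ₜ[k] (1 : H) with hU
  set V : (H ⊗[k] H) ⊗[k] H := aInv k ((1 : H) ⊗ₜ[k] θ) with hV
  set W : (H ⊗[k] H) ⊗[k] H := ∑ i, (A i ⊗ₜ[k] (1 : H)) ⊗ₜ[k] B i with hW
  set T : (H ⊗[k] H) ⊗[k] H := ∑ i, c (A i) ⊗ₜ[k] B i with hT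
  set S : (H ⊗[k] H) ⊗[k] H := ∑ i, aInv k (A i ⊗ₜ[k] c (B i)) with hS
  have haInvt : ∀ x y z : H, aInv k (x ⊗ₜ[k] (y ⊗ₜ[k] z)) = (x ⊗ₜ[k] y) ⊗ₜ[k] z := by
    intro x y z; simp [aInv]
  have hUsum : U = ∑ i, (A i ⊗ₜ[k] B i) ⊗ₜ[k] (1 : H) := by
    rw [hU, hθ, sum_tmul]
  have hVsum : V = ∑ i, ((1 : H) ⊗ₜ[k] A i) ⊗ₜ[k] B i := by
    rw [hV, hθ, tmul_sum, map_sum]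
    exact Finset.sum_congr rfl fun i _ => haInvt _ _ _
  have hTeq : T = W + V := by
    rw [hT, hVsum, hW, ← Finset.sum_add_distrib]
    exact Finset.sum_congr rfl fun i _ => by rw [hcA i, add_tmul]
  have hSeq : S = U + W := by
    rw [hS, hUsum, hW, ← Finset.sum_add_distrib]
    refine Finset.sum_congr rfl fun i _ => ?_
    rw [hcB i, tmul_add, map_add, haInvt, haInvt]
  -- commutation relations
  have hUV : U * V = V * U := by
    rw [hUsum, hVsum]
    simp only [Finset.sum_mul, Finset.mul_sum]
    rw [Finset.sum_comm]
    refine Finset.sum_congr rfl fun j _ => Finset.sum_congr rfl fun i _ => ?_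
    simp only [Algebra.TensorProduct.tmul_mul_tmul, one_mul, mul_one]
    rw [hAB i j]
  have hUW : U * W = W * U := by
    rw [hUsum, hW]
    simp only [Finset.sum_mul, Finset.mul_sum]
    rw [Finset.sum_comm]
    refine Finset.sum_congr rfl fun j _ => Finset.sum_congr rfl fun i _ => ?_
    simp only [Algebra.TensorProduct.tmul_mul_tmul, one_mul, mul_one]
    rw [hAA i j]
  have hVW : V * W = W * V := by
    rw [hVsum, hW]
    simp only [Finset.sum_mul, Finset.mul_sum]
    rw [Finset.sum_comm]
    refine Finset.sum_congr rfl fun j _ => Finset.sum_congr rfl fun i _ => ?_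
    simp only [Algebra.TensorProduct.tmul_mul_tmul, one_mul, mul_one]
    rw [hBB i j]
  have hTU : T * U = U * T := by
    rw [hTeq, add_mul, mul_add, ← hUW, ← hUV]
  have hSV : S * V = V * S := by
    rw [hSeq, add_mul, mul_add, hUV, ← hVW]
  -- powers of θ in the outer positions
  have hUpow : ∀ q : ℕ, (θ ^ q) ⊗ₜ[k] (1 : H) = U ^ q := by
    intro q
    induction q with
    | zero => rw [pow_zero, pow_zero]; exact (Algebra.TensorProduct.one_def).symm
    | succ q ih =>
        rw [pow_succ, pow_succ, ← ih, hU, Algebra.TensorProduct.tmul_mul_tmul, mul_one]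
  have hVpow : ∀ q : ℕ, aInv k ((1 : H) ⊗ₜ[k] (θ ^ q)) = V ^ q := by
    intro q
    induction q with
    | zero =>
        rw [pow_zero, pow_zero,
          show (1 : H) ⊗ₜ[k] (1 : H ⊗[k] H) = (1 : H ⊗[k] (H ⊗[k] H)) from
            (Algebra.TensorProduct.one_def).symm]
        exact aInv_one k
    | succ q ih =>
        rw [pow_succ, pow_succ, ← ih, hV,
          show (1 : H) ⊗ₜ[k] (θ ^ q * θ) = ((1 : H) ⊗ₜ[k] (θ ^ q)) * ((1 : H) ⊗ₜ[k] θ) from by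
            rw [Algebra.TensorProduct.tmul_mul_tmul, one_mul],
          aInv_mul]
  -- units
  have hF1L : DL k c (1 : H ⊗[k] H) = 1 := by
    have hv : DL k c ((1 : H) ⊗ₜ[k] (1 : H)) = c 1 ⊗ₜ[k] (1 : H) := by simp [DL]
    rw [Algebra.TensorProduct.one_def, hv, hc1, ← Algebra.TensorProduct.one_def]
  have hF1R : DR k c (1 : H ⊗[k] H) = 1 := by
    have hv : DR k c ((1 : H) ⊗ₜ[k] (1 : H)) = aInv k ((1 : H) ⊗ₜ[k] c 1) := by
      simp [DR, aInv]
    rw [Algebra.TensorProduct.one_def, hv, hc1,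
      show (1 : H) ⊗ₜ[k] (1 : H ⊗[k] H) = (1 : H ⊗[k] (H ⊗[k] H)) from
        (Algebra.TensorProduct.one_def).symm, aInv_one]
  -- steps
  have hstepL : ∀ u : H ⊗[k] H, DL k c (u * θ) - DL k c u * T ∈ relQ3 k af bf := by
    intro u
    rw [hθ, Finset.mul_sum, map_sum, hT, Finset.mul_sum, ← Finset.sum_sub_distrib]
    exact Submodule.sum_mem _ fun i _ => DL_step k af bf c hcm (A i) (B i) u
  have hstepR : ∀ u : H ⊗[k] H, DR k c (u * θ) - DR k c u * S ∈ relQ3 k af bf := by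
    intro u
    rw [hθ, Finset.mul_sum, map_sum, hS, Finset.mul_sum, ← Finset.sum_sub_distrib]
    exact Submodule.sum_mem _ fun i _ => DR_step k af bf c hcm (A i) (B i) u
  have hdescL := pow_descend k af bf (DL k c) θ T hF1L hstepL
  have hdescR := pow_descend k af bf (DR k c) θ S hF1R hstepR
  -- assemble
  have hL : prQ3 k af bf (∑ p ∈ antidiagonal n,
        DL k c ((p.1.factorial : k)⁻¹ • θ ^ p.1)
          * (((p.2.factorial : k)⁻¹ • θ ^ p.2) ⊗ₜ[k] (1 : H)))
      = prQ3 k af bf (((n.factorial : k))⁻¹ • (T + U) ^ n) := by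
    rw [map_sum]
    have hterm : ∀ p ∈ antidiagonal n,
        prQ3 k af bf (DL k c ((p.1.factorial : k)⁻¹ • θ ^ p.1)
            * (((p.2.factorial : k)⁻¹ • θ ^ p.2) ⊗ₜ[k] (1 : H)))
          = prQ3 k af bf
              (((p.1.factorial : k)⁻¹ * (p.2.factorial : k)⁻¹) • (T ^ p.1 * U ^ p.2)) := by
      intro p _
      have e1' : DL k c ((p.1.factorial : k)⁻¹ • θ ^ p.1)
          = (p.1.factorial : k)⁻¹ • DL k c (θ ^ p.1) := map_smul _ _ _
      have e2' : ((p.2.factorial : k)⁻¹ • θ ^ p.2) ⊗ₜ[k] (1 : H)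
          = (p.2.factorial : k)⁻¹ • U ^ p.2 := by
        rw [← smul_tmul', hUpow]
      rw [e1', e2', smul_mul_smul_comm, map_smul, map_smul, hdescL p.1 (U ^ p.2)]
    rw [Finset.sum_congr rfl hterm, ← map_sum]
    congr 1
    rw [comb_aux T U hTU n]
  have hR : prQ3 k af bf (∑ p ∈ antidiagonal n,
        DR k c ((p.1.factorial : k)⁻¹ • θ ^ p.1)
          * aInv k ((1 : H) ⊗ₜ[k] ((p.2.factorial : k)⁻¹ • θ ^ p.2)))
      = prQ3 k af bf (((n.factorial : k))⁻¹ • (S + V) ^ n) := by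
    rw [map_sum]
    have hterm : ∀ p ∈ antidiagonal n,
        prQ3 k af bf (DR k c ((p.1.factorial : k)⁻¹ • θ ^ p.1)
            * aInv k ((1 : H) ⊗ₜ[k] ((p.2.factorial : k)⁻¹ • θ ^ p.2)))
          = prQ3 k af bf
              (((p.1.factorial : k)⁻¹ * (p.2.factorial : k)⁻¹) • (S ^ p.1 * V ^ p.2)) := by
      intro p _
      have e1' : DR k c ((p.1.factorial : k)⁻¹ • θ ^ p.1)
          = (p.1.factorial : k)⁻¹ • DR k c (θ ^ p.1) := map_smul _ _ _
      have e2' : aInv k ((1 : H) ⊗ₜ[k] ((p.2.factorial : k)⁻¹ • θ ^ p.2))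
          = (p.2.factorial : k)⁻¹ • V ^ p.2 := by
        rw [tmul_smul, map_smul, hVpow]
      rw [e1', e2', smul_mul_smul_comm, map_smul, map_smul, hdescR p.1 (V ^ p.2)]
    rw [Finset.sum_congr rfl hterm, ← map_sum]
    congr 1
    rw [comb_aux S V hSV n]
  rw [hL, hR]
  congr 2
  rw [hTeq, hSeq]
  abel

end CocycleMain

noncomputable section

open TensorProduct Finset

set_option maxHeartbeats 2000000

/-- Lemma 7.1.  Let `η` be a finite-dimensional abelian Lie
algebra with basis `h₁, …, h_N`, and let `H = D ⊗ U_ℏ𝔤` be the Hopf algebroid over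
`R = M(η*)[[ℏ]]` (axiomatized: `D` the algebra of meromorphic differential
operators on `η*` with source `αD`, anchor `μD` and coproduct lift `Δ'D`; `G = U_ℏ𝔤`
a bialgebra; the `hᵢ ∈ G` primitive, commuting, with `ε₀(hᵢ) = 0`; the
`∂/∂λᵢ = dᵢ ∈ D` primitive, commuting, with `dᵢ(1) = 0`).  Set
`θ = Σᵢ (∂/∂λᵢ ⊗ hᵢ)` and `Θ = exp(ℏθ)` (the series `Θₙ = θⁿ/n!`).  Then `Θ`
satisfies the twistor cocycle identity
`((Δ ⊗_R id)Θ)Θ¹² = ((id ⊗_R Δ)Θ)Θ²³` and the counit identities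
`(ε ⊗_R id)Θ = (id ⊗_R ε)Θ = 1`, order by order in `ℏ`. -/
theorem statement14
    (k R D G : Type) [Field k] [CharZero k] [CommRing R] [Algebra k R]
    [Ring D] [Algebra k D] [Ring G] [Bialgebra k G]
    (αD : R →ₐ[k] D) (μD : D →ₐ[k] Module.End k R)
    (Δ'D : D →ₗ[k] D ⊗[k] D)
    (N : ℕ) (d : Fin N → D) (h : Fin N → G)
    -- the `hᵢ` span an abelian subalgebra of primitive elements with `ε₀(hᵢ) = 0`:
    (hprim_h : ∀ i, Coalgebra.comul (R := k) (h i)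
      = h i ⊗ₜ[k] (1 : G) + (1 : G) ⊗ₜ[k] h i)
    (hcou_h : ∀ i, Coalgebra.counit (R := k) (h i) = (0 : k))
    (hcomm_h : ∀ i j, h i * h j = h j * h i)
    -- the coordinate derivations `dᵢ = ∂/∂λᵢ` are primitive, commute, kill `1`:
    (hprim_d : ∀ i, Δ'D (d i) = d i ⊗ₜ[k] (1 : D) + (1 : D) ⊗ₜ[k] d i)
    (hd1 : ∀ i, μD (d i) 1 = 0)
    (hcomm_d : ∀ i j, d i * d j = d j * d i)
    -- `Δ'D` lifts a coproduct with `Δ(1) = 1 ⊗ 1`: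
    (hΔ1 : Δ'D 1 = 1)
    -- the coproduct of `H` is multiplicative modulo the relations:
    (hmulH : ∀ x y : D ⊗[k] G,
      prQ k (fun a => srcH k G αD a) (fun a => srcH k G αD a) (copH k Δ'D (x * y))
        = prQ k (fun a => srcH k G αD a) (fun a => srcH k G αD a)
            (copH k Δ'D x * copH k Δ'D y)) :
    -- cocycle identity, order by order in `ℏ`:
    ((∀ n : ℕ,
      prQ3 k (fun a => srcH k G αD a) (fun a => srcH k G αD a)
        (∑ p ∈ antidiagonal n,
          DL k (copH k Δ'D) (ThetaH k d h p.1) * (ThetaH k d h p.2 ⊗ₜ[k] (1 : D ⊗[k] G)))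
      = prQ3 k (fun a => srcH k G αD a) (fun a => srcH k G αD a)
        (∑ p ∈ antidiagonal n,
          DR k (copH k Δ'D) (ThetaH k d h p.1)
            * aInv k ((1 : D ⊗[k] G) ⊗ₜ[k] ThetaH k d h p.2)))
    -- counit identities, order by order in `ℏ`:
    ∧ (∀ n : ℕ,
        e1 k (srcH k G αD).toLinearMap (couH k μD) (ThetaH k d h n)
          = (if n = 0 then (1 : D ⊗[k] G) else 0)
        ∧ e2 k (srcH k G αD).toLinearMap (couH k μD) (ThetaH k d h n)
          = (if n = 0 then (1 : D ⊗[k] G) else 0))) := by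
  classical
  -- Notation
  set af : R → D ⊗[k] G := fun a => srcH k G αD a with haf
  have hθsum : thetaH k d h = ∑ i, (d i ⊗ₜ[k] (1 : G)) ⊗ₜ[k] ((1 : D) ⊗ₜ[k] h i) := rfl
  -- counit of G on 1 ⊗ comul computations
  have hcom1 : Coalgebra.comul (R := k) (1 : G) = (1 : G) ⊗ₜ[k] (1 : G) := by
    rw [Bialgebra.comul_one]; rfl
  have hΔ1' : Δ'D (1 : D) = (1 : D) ⊗ₜ[k] (1 : D) := by rw [hΔ1]; rfl
  -- coproduct on the generators
  have hcA : ∀ i, copH k Δ'D ((d i ⊗ₜ[k] (1 : G)) : D ⊗[k] G)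
      = (d i ⊗ₜ[k] (1 : G)) ⊗ₜ[k] (1 : D ⊗[k] G)
        + (1 : D ⊗[k] G) ⊗ₜ[k] (d i ⊗ₜ[k] (1 : G)) := by
    intro i
    simp [copH, hprim_d i, hcom1, add_tmul, Algebra.TensorProduct.one_def]
  have hcB : ∀ i, copH k Δ'D (((1 : D) ⊗ₜ[k] h i) : D ⊗[k] G)
      = ((1 : D) ⊗ₜ[k] h i) ⊗ₜ[k] (1 : D ⊗[k] G)
        + (1 : D ⊗[k] G) ⊗ₜ[k] ((1 : D) ⊗ₜ[k] h i) := by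
    intro i
    simp [copH, hprim_h i, hΔ1', tmul_add, Algebra.TensorProduct.one_def]
  have hc1 : copH k Δ'D (1 : D ⊗[k] G) = 1 := by
    have hv : copH k Δ'D ((1 : D) ⊗ₜ[k] (1 : G))
        = ((1 : D) ⊗ₜ[k] (1 : G)) ⊗ₜ[k] ((1 : D) ⊗ₜ[k] (1 : G)) := by
      simp [copH, hΔ1', hcom1]
    exact hv
  have hcm : ∀ x y : D ⊗[k] G,
      copH k Δ'D (x * y) - copH k Δ'D x * copH k Δ'D y ∈ relQ k af af := by
    intro x y
    exact (Submodule.Quotient.eq _).mp (hmulH x y)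
  constructor
  · -- cocycle identity
    intro n
    have hAA : ∀ i j : Fin N, (d i ⊗ₜ[k] (1 : G)) * (d j ⊗ₜ[k] (1 : G))
        = (d j ⊗ₜ[k] (1 : G)) * (d i ⊗ₜ[k] (1 : G)) := by
      intro i j
      rw [Algebra.TensorProduct.tmul_mul_tmul, Algebra.TensorProduct.tmul_mul_tmul,
        hcomm_d i j]
    have hBB : ∀ i j : Fin N, ((1 : D) ⊗ₜ[k] h i) * ((1 : D) ⊗ₜ[k] h j)
        = ((1 : D) ⊗ₜ[k] h j) * ((1 : D) ⊗ₜ[k] h i) := by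
      intro i j
      rw [Algebra.TensorProduct.tmul_mul_tmul, Algebra.TensorProduct.tmul_mul_tmul,
        hcomm_h i j]
    have hAB : ∀ i j : Fin N, (d i ⊗ₜ[k] (1 : G)) * ((1 : D) ⊗ₜ[k] h j)
        = ((1 : D) ⊗ₜ[k] h j) * (d i ⊗ₜ[k] (1 : G)) := by
      intro i j
      rw [Algebra.TensorProduct.tmul_mul_tmul, Algebra.TensorProduct.tmul_mul_tmul]
      simp only [one_mul, mul_one]
    exact cocycle_main k af af (copH k Δ'D) hc1 hcm
      (fun i => d i ⊗ₜ[k] (1 : G)) (fun i => (1 : D) ⊗ₜ[k] h i)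
      hcA hcB hAA hBB hAB n
  · -- counit identities
    intro n
    have hεA : ∀ (x : D ⊗[k] G) (i : Fin N),
        couH k μD (x * (d i ⊗ₜ[k] (1 : G))) = 0 := by
      intro x i
      induction x using TensorProduct.induction_on with
      | zero => rw [zero_mul, map_zero]
      | tmul p u =>
          rw [Algebra.TensorProduct.tmul_mul_tmul, mul_one]
          have hc : couH k μD ((p * d i) ⊗ₜ[k] u)
              = Coalgebra.counit (R := k) u • μD (p * d i) 1 := by simp [couH]
          rw [hc, map_mul, Module.End.mul_apply, hd1, map_zero, smul_zero]
      | add p q hp hq => rw [add_mul, map_add, hp, hq, add_zero]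
    have hεB : ∀ (x : D ⊗[k] G) (i : Fin N),
        couH k μD (x * ((1 : D) ⊗ₜ[k] h i)) = 0 := by
      intro x i
      induction x using TensorProduct.induction_on with
      | zero => rw [zero_mul, map_zero]
      | tmul p u =>
          rw [Algebra.TensorProduct.tmul_mul_tmul, mul_one]
          have hc : couH k μD (p ⊗ₜ[k] (u * h i))
              = Coalgebra.counit (R := k) (u * h i) • μD p 1 := by simp [couH]
          rw [hc, Bialgebra.counit_mul, hcou_h, mul_zero, zero_smul]
      | add p q hp hq => rw [add_mul, map_add, hp, hq, add_zero]
    have hcou1 : couH k μD (1 : D ⊗[k] G) = 1 := by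
      show couH k μD ((1 : D) ⊗ₜ[k] (1 : G)) = 1
      simp [couH]
    have he1θ : ∀ u : (D ⊗[k] G) ⊗[k] (D ⊗[k] G),
        e1 k (srcH k G αD).toLinearMap (couH k μD) (u * thetaH k d h) = 0 := by
      intro u
      rw [hθsum, Finset.mul_sum, map_sum]
      apply Finset.sum_eq_zero
      intro i _
      induction u using TensorProduct.induction_on with
      | zero => rw [zero_mul, map_zero]
      | tmul x y =>
          rw [Algebra.TensorProduct.tmul_mul_tmul]
          have he : e1 k (srcH k G αD).toLinearMap (couH k μD)
                ((x * (d i ⊗ₜ[k] (1 : G))) ⊗ₜ[k] (y * ((1 : D) ⊗ₜ[k] h i)))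
              = (srcH k G αD) (couH k μD (x * (d i ⊗ₜ[k] (1 : G))))
                  * (y * ((1 : D) ⊗ₜ[k] h i)) := by simp [e1]
          rw [he, hεA, map_zero, zero_mul]
      | add p q hp hq => rw [add_mul, map_add, hp, hq, add_zero]
    have he2θ : ∀ u : (D ⊗[k] G) ⊗[k] (D ⊗[k] G),
        e2 k (srcH k G αD).toLinearMap (couH k μD) (u * thetaH k d h) = 0 := by
      intro u
      rw [hθsum, Finset.mul_sum, map_sum]
      apply Finset.sum_eq_zero
      intro i _
      induction u using TensorProduct.induction_on with
      | zero => rw [zero_mul, map_zero]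
      | tmul x y =>
          rw [Algebra.TensorProduct.tmul_mul_tmul]
          have he : e2 k (srcH k G αD).toLinearMap (couH k μD)
                ((x * (d i ⊗ₜ[k] (1 : G))) ⊗ₜ[k] (y * ((1 : D) ⊗ₜ[k] h i)))
              = (srcH k G αD) (couH k μD (y * ((1 : D) ⊗ₜ[k] h i)))
                  * (x * (d i ⊗ₜ[k] (1 : G))) := by simp [e2]
          rw [he, hεB, map_zero, zero_mul]
      | add p q hp hq => rw [add_mul, map_add, hp, hq, add_zero]
    cases n with
    | zero =>
        have h0 : ThetaH k d h 0 = (1 : (D ⊗[k] G) ⊗[k] (D ⊗[k] G)) := by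
          rw [ThetaH, pow_zero, Nat.factorial_zero, Nat.cast_one, inv_one, one_smul]
        rw [h0]
        constructor
        · have he : e1 k (srcH k G αD).toLinearMap (couH k μD)
              ((1 : D ⊗[k] G) ⊗ₜ[k] (1 : D ⊗[k] G))
              = (srcH k G αD) (couH k μD (1 : D ⊗[k] G)) * (1 : D ⊗[k] G) := by simp [e1]
          rw [Algebra.TensorProduct.one_def, he, hcou1, map_one, mul_one]
          simp
        · have he : e2 k (srcH k G αD).toLinearMap (couH k μD)
              ((1 : D ⊗[k] G) ⊗ₜ[k] (1 : D ⊗[k] G))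
              = (srcH k G αD) (couH k μD (1 : D ⊗[k] G)) * (1 : D ⊗[k] G) := by simp [e2]
          rw [Algebra.TensorProduct.one_def, he, hcou1, map_one, mul_one]
          simp
    | succ m =>
        have hsplit : ThetaH k d h (m + 1)
            = ((m + 1).factorial : k)⁻¹ • (thetaH k d h ^ m * thetaH k d h) := by
          rw [ThetaH, pow_succ]
        rw [if_neg (Nat.succ_ne_zero m), hsplit]
        constructor
        · rw [map_smul, he1θ, smul_zero]
        · rw [map_smul, he2θ, smul_zero]

end
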